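/- For every integer n ≥ 1, every real R ≥ 2, and every ζ ∈ 𝕋ⁿ = (ℝ/ℤ)ⁿ, the Fourier transform of the discrete Gaussian satisfies |γ̂_R(ζ)| ≤ exp(−R²·‖ζ‖²_{𝕋ⁿ}/5). -/

import Mathlib

open scoped BigOperators

noncomputable section

/-- Euclidean norm of a real vector. -/
def l2 {m : ℕ} (x : Fin m → ℝ) : ℝ := Real.sqrt (∑ i, x i ^ 2)

/-- Euclidean norm of an integer vector. -/
def l2Z {m : ℕ} (x : Fin m → ℤ) : ℝ := l2 (fun i => (x i : ℝ))

/-- The torus norm: distance from a representative `ζ` of a point of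
`𝕋ⁿ = (ℝ/ℤ)ⁿ` to the nearest point of the integer lattice `ℤⁿ`. -/
def tnorm {m : ℕ} (ζ : Fin m → ℝ) : ℝ := ⨅ z : Fin m → ℤ, l2 (fun i => ζ i - z i)

/-- The discrete Gaussian probability mass function of radius `R` on `ℤⁿ`:
`γ_R(x) = exp(-π‖x‖²/R²) / ∑_y exp(-π‖y‖²/R²)`. -/
def dgauss (n : ℕ) (R : ℝ) (x : Fin n → ℤ) : ℝ :=
  Real.exp (-Real.pi * l2Z x ^ 2 / R ^ 2) /
    ∑' y : Fin n → ℤ, Real.exp (-Real.pi * l2Z y ^ 2 / R ^ 2)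

/-- `μ` is a probability mass function on `ℤⁿ`. -/
def IsPMF {n : ℕ} (μ : (Fin n → ℤ) → ℝ) : Prop := (∀ x, 0 ≤ μ x) ∧ HasSum μ 1

/-- The pairing `⟨ζ, x⟩ = ∑ i, ζ i * x i` of a torus representative and a lattice point. -/
def pair {n : ℕ} (ζ : Fin n → ℝ) (x : Fin n → ℤ) : ℝ := ∑ i, ζ i * (x i : ℝ)

/-- The Fourier transform `μ̂(ζ) = ∑ₓ μ(x)·exp(-2πi⟨ζ,x⟩)` of `μ : ℤⁿ → ℝ`,
evaluated at a representative of a torus point. -/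
def ft {n : ℕ} (μ : (Fin n → ℤ) → ℝ) (ζ : Fin n → ℝ) : ℂ :=
  ∑' x : Fin n → ℤ, (μ x : ℂ) * Complex.exp (-(2 * (Real.pi : ℂ) * Complex.I) * (pair ζ x : ℂ))

/-- The theta-type sum `∑ₖ exp(-πR²(k+t)²)`. -/
def Gt (R t : ℝ) : ℝ := ∑' k : ℤ, Real.exp (-(Real.pi * R ^ 2 * ((k : ℝ) + t) ^ 2))

/-- The positive-integer part of the theta sum. -/
def Sp (R : ℝ) : ℝ := ∑' k : ℕ, Real.exp (-(Real.pi * R ^ 2 * ((k : ℝ) + 1) ^ 2))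

lemma summable_gauss_nat (c a : ℝ) (hc : 0 < c) :
    Summable fun k : ℕ => Real.exp (-(c * ((k : ℝ) + a) ^ 2)) := by
  have hsum : Summable fun k : ℕ => Real.exp (c * (a ^ 2 + 1)) * Real.exp (-c) ^ k :=
    (summable_geometric_of_lt_one (Real.exp_pos _).le
      (Real.exp_lt_one_iff.2 (by linarith))).mul_left _
  refine Summable.of_nonneg_of_le (fun k => (Real.exp_pos _).le) (fun k => ?_) hsum
  rw [← Real.exp_nat_mul, ← Real.exp_add]
  apply Real.exp_le_exp.2
  have hk : (0:ℝ) ≤ (k:ℝ) := Nat.cast_nonneg k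
  nlinarith [mul_nonneg hc.le (sq_nonneg ((k:ℝ) + 2*a)), mul_nonneg hc.le (sq_nonneg ((k:ℝ) - 1))]

lemma summable_gauss (c t : ℝ) (hc : 0 < c) :
    Summable fun k : ℤ => Real.exp (-(c * ((k : ℝ) + t) ^ 2)) := by
  refine Summable.of_nat_of_neg_add_one ?_ ?_
  · simpa using summable_gauss_nat c t hc
  · have := summable_gauss_nat c (1 - t) hc
    refine this.congr fun k => ?_
    push_cast
    ring_nf

lemma pR_pos {R : ℝ} (hR : 0 < R) : 0 < Real.pi * R ^ 2 := by positivity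

lemma summable_Gt {R : ℝ} (hR : 0 < R) (t : ℝ) :
    Summable fun k : ℤ => Real.exp (-(Real.pi * R ^ 2 * ((k : ℝ) + t) ^ 2)) :=
  summable_gauss _ t (pR_pos hR)

lemma Gt_nonneg (R t : ℝ) : 0 ≤ Gt R t :=
  tsum_nonneg fun _ => (Real.exp_pos _).le

lemma Gt_pos {R : ℝ} (hR : 0 < R) (t : ℝ) : 0 < Gt R t :=
  Summable.tsum_pos (summable_Gt hR t) (fun _ => (Real.exp_pos _).le) 0 (Real.exp_pos _)

lemma one_le_Gt_zero {R : ℝ} (hR : 0 < R) : 1 ≤ Gt R 0 := by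
  have h := Summable.le_tsum (summable_Gt hR 0) 0 (fun j _ => (Real.exp_pos _).le)
  unfold Gt
  simpa using h

lemma Gt_int_add {R : ℝ} (t : ℝ) (m : ℤ) : Gt R (t + m) = Gt R t := by
  unfold Gt
  rw [← (Equiv.addRight m).tsum_eq (fun k : ℤ => Real.exp (-(Real.pi * R ^ 2 * ((k : ℝ) + t) ^ 2)))]
  refine tsum_congr fun k => ?_
  simp only [Equiv.coe_addRight]
  push_cast
  ring_nf

lemma Gt_neg (R t : ℝ) : Gt R (-t) = Gt R t := by
  unfold Gt
  rw [← (Equiv.neg ℤ).tsum_eq (fun k : ℤ => Real.exp (-(Real.pi * R ^ 2 * ((k : ℝ) + t) ^ 2)))]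
  refine tsum_congr fun k => ?_
  simp only [Equiv.neg_apply]
  push_cast
  ring_nf

lemma Gt_split {R : ℝ} (hR : 0 < R) (t : ℝ) :
    Gt R t = (∑' k : ℕ, Real.exp (-(Real.pi * R ^ 2 * (((k : ℝ) + 1) + t) ^ 2)))
      + Real.exp (-(Real.pi * R ^ 2 * t ^ 2))
      + ∑' k : ℕ, Real.exp (-(Real.pi * R ^ 2 * (((k : ℝ) + 1) - t) ^ 2)) := by
  set f : ℤ → ℝ := fun k : ℤ => Real.exp (-(Real.pi * R ^ 2 * ((k : ℝ) + t) ^ 2)) with hf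
  have hinj1 : Function.Injective (fun k : ℕ => ((k : ℤ) + 1)) := fun a b h => by
    simpa using h
  have hinj2 : Function.Injective (fun k : ℕ => (-((k : ℤ) + 1))) := fun a b h => by
    simpa using h
  have h1 : Summable (f ∘ fun k : ℕ => ((k : ℤ) + 1)) := (summable_Gt hR t).comp_injective hinj1
  have h2 : Summable (f ∘ fun k : ℕ => (-((k : ℤ) + 1))) := (summable_Gt hR t).comp_injective hinj2
  have := tsum_of_add_one_of_neg_add_one (f := f) h1 h2
  rw [Gt, this]
  congr 1
  · congr 1
    · refine tsum_congr fun k => ?_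
      simp only [hf]; push_cast; ring_nf
    · simp only [hf]; norm_num
  · refine tsum_congr fun k => ?_
    simp only [hf]; push_cast; ring_nf

lemma exp_add_exp_neg_le (x : ℝ) (hx : 0 ≤ x) :
    Real.exp x + Real.exp (-x) ≤ 2 + x ^ 2 * Real.exp x := by
  have ha : Real.exp (x/2) * Real.exp (x/2) = Real.exp x := by
    rw [← Real.exp_add]; ring_nf
  have hb : Real.exp (-(x/2)) * Real.exp (-(x/2)) = Real.exp (-x) := by
    rw [← Real.exp_add]; ring_nf
  have hab : Real.exp (x/2) * Real.exp (-(x/2)) = 1 := by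
    rw [← Real.exp_add]; norm_num
  have h1 : Real.exp x * (1 - x) ≤ 1 := by
    have h2 := Real.add_one_le_exp (-x)
    have h3 : Real.exp x * (1 - x) ≤ Real.exp x * Real.exp (-x) :=
      mul_le_mul_of_nonneg_left (by linarith) (Real.exp_pos x).le
    rwa [← Real.exp_add, add_neg_cancel, Real.exp_zero] at h3
  have hba : Real.exp (-(x/2)) ≤ Real.exp (x/2) := Real.exp_le_exp.2 (by linarith)
  have hd : Real.exp (x/2) - Real.exp (-(x/2)) ≤ x * Real.exp (x/2) := by
    rw [← mul_le_mul_iff_of_pos_right (Real.exp_pos (x/2))]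
    nlinarith [ha, hab, h1]
  have hsq : (Real.exp (x/2) - Real.exp (-(x/2))) ^ 2 ≤ (x * Real.exp (x/2)) ^ 2 :=
    pow_le_pow_left₀ (by linarith) hd 2
  nlinarith [hsq, ha, hb, hab]

lemma sq_mul_exp_le (s u : ℝ) (hs : 4 ≤ s) (hu : 1 ≤ u) :
    s ^ 2 * Real.exp (-(Real.pi * u ^ 2 * s / 2)) ≤ 16 * Real.exp (-(2 * Real.pi * u ^ 2)) := by
  have hpi := Real.pi_gt_three
  have key : s ^ 2 ≤ 16 * Real.exp (Real.pi * u ^ 2 * (s - 4) / 2) := by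
    have h1 := Real.add_one_le_exp (Real.pi * u ^ 2 * (s - 4) / 4)
    have h2 : Real.exp (Real.pi * u ^ 2 * (s - 4) / 4) * Real.exp (Real.pi * u ^ 2 * (s - 4) / 4)
        = Real.exp (Real.pi * u ^ 2 * (s - 4) / 2) := by rw [← Real.exp_add]; ring_nf
    have hy2 : (s - 4)/4 ≤ Real.pi * u ^ 2 * (s - 4) / 4 := by
      have h4 : (0:ℝ) ≤ s - 4 := by linarith
      have h5 : (1:ℝ) ≤ Real.pi * u ^ 2 := by nlinarith
      nlinarith
    have hE : s/4 ≤ Real.exp (Real.pi * u ^ 2 * (s - 4) / 4) := by linarith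
    have hs4 : (0:ℝ) ≤ s/4 := by linarith
    nlinarith [mul_le_mul hE hE hs4 (Real.exp_pos _).le, h2]
  have hsplit : Real.exp (-(Real.pi * u ^ 2 * s / 2)) =
      Real.exp (-(2 * Real.pi * u ^ 2)) * Real.exp (-(Real.pi * u ^ 2 * (s - 4) / 2)) := by
    rw [← Real.exp_add]; ring_nf
  rw [hsplit]
  have hinv : Real.exp (Real.pi * u ^ 2 * (s - 4) / 2) *
      Real.exp (-(Real.pi * u ^ 2 * (s - 4) / 2)) = 1 := by
    rw [← Real.exp_add]; norm_num
  have hk2 : s ^ 2 * Real.exp (-(Real.pi * u ^ 2 * (s - 4) / 2)) ≤ 16 := by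
    nlinarith [mul_le_mul_of_nonneg_right key (Real.exp_pos (-(Real.pi * u ^ 2 * (s - 4) / 2))).le,
      hinv]
  have := mul_le_mul_of_nonneg_right hk2 (Real.exp_pos (-(2 * Real.pi * u ^ 2))).le
  nlinarith [this]

lemma sq_le_exp (u : ℝ) (hu : 0 ≤ u) : u ^ 2 ≤ Real.exp u := by
  have h1 := Real.add_one_le_exp (u/4)
  have e2 : Real.exp (u/4) * Real.exp (u/4) = Real.exp (u/2) := by rw [← Real.exp_add]; ring_nf
  have hu2 : u ≤ Real.exp (u/2) := by nlinarith [sq_nonneg (1 - u/4), Real.exp_pos (u/4)]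
  have e4 : Real.exp (u/2) * Real.exp (u/2) = Real.exp u := by rw [← Real.exp_add]; ring_nf
  nlinarith [hu2, e4]

lemma sq_mul_exp_le' (u : ℝ) (hu : 1 ≤ u) :
    u ^ 2 * Real.exp (-(2 * Real.pi * u ^ 2)) ≤ Real.exp (-((2 * Real.pi - 1) * u)) := by
  have h1 : u ^ 2 ≤ Real.exp u := sq_le_exp u (by linarith)
  have h2 : u ^ 2 * Real.exp (-(2 * Real.pi * u ^ 2)) ≤
      Real.exp u * Real.exp (-(2 * Real.pi * u ^ 2)) :=
    mul_le_mul_of_nonneg_right h1 (Real.exp_pos _).le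
  rw [← Real.exp_add] at h2
  refine h2.trans (Real.exp_le_exp.2 ?_)
  have hpi := Real.pi_gt_three
  nlinarith [sq_nonneg (u - 1)]

lemma q_small : Real.exp (-(2 * Real.pi - 1)) ≤ 1 / 100 := by
  have h5 : (100:ℝ) ≤ Real.exp (2 * Real.pi - 1) := by
    have hpi := Real.pi_gt_three
    have h1 : Real.exp 5 ≤ Real.exp (2 * Real.pi - 1) := Real.exp_le_exp.2 (by linarith)
    have h2 : (2.7182818283:ℝ) ^ (5:ℕ) ≤ (Real.exp 1) ^ (5:ℕ) :=
      pow_le_pow_left₀ (by norm_num) Real.exp_one_gt_d9.le 5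
    have h3 : (Real.exp 1) ^ (5:ℕ) = Real.exp 5 := by
      rw [← Real.exp_nat_mul]; norm_num
    nlinarith [h1, h2, h3]
  rw [Real.exp_neg]
  rw [inv_le_comm₀ (Real.exp_pos _) (by norm_num)]
  linarith

lemma term_refined (R t : ℝ) (hR : 2 ≤ R) (ht0 : 0 ≤ t) (ht : t ≤ 1/4) (k : ℕ) :
    Real.exp (-(Real.pi * R ^ 2 * (((k:ℝ) + 1) + t) ^ 2))
      + Real.exp (-(Real.pi * R ^ 2 * (((k:ℝ) + 1) - t) ^ 2))
    ≤ Real.exp (-(Real.pi * R ^ 2 * t ^ 2)) *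
        (2 * Real.exp (-(Real.pi * R ^ 2 * ((k:ℝ) + 1) ^ 2))
          + 64 * Real.pi ^ 2 * t ^ 2 * Real.exp (-(2 * Real.pi - 1)) ^ (k + 1)) := by
  have hpi := Real.pi_gt_three
  have hR2 : (4:ℝ) ≤ R ^ 2 := by nlinarith
  set u : ℝ := (k:ℝ) + 1 with hu_def
  have hk0 : (0:ℝ) ≤ (k:ℝ) := Nat.cast_nonneg k
  have hu : 1 ≤ u := by rw [hu_def]; linarith
  set c : ℝ := Real.pi * R ^ 2 with hc_def
  have hc : 0 < c := by rw [hc_def]; nlinarith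
  set x : ℝ := 2 * c * u * t with hx_def
  have hx0 : 0 ≤ x := by
    rw [hx_def]
    exact mul_nonneg (by nlinarith) ht0
  have e1 : Real.exp (-(c * (u + t) ^ 2))
      = Real.exp (-(c * t ^ 2)) * Real.exp (-(c * u ^ 2)) * Real.exp (-x) := by
    rw [← Real.exp_add, ← Real.exp_add, hx_def]; ring_nf
  have e2 : Real.exp (-(c * (u - t) ^ 2))
      = Real.exp (-(c * t ^ 2)) * Real.exp (-(c * u ^ 2)) * Real.exp x := by
    rw [← Real.exp_add, ← Real.exp_add, hx_def]; ring_nf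
  have hL1 := exp_add_exp_neg_le x hx0
  have c1 : Real.exp x * Real.exp (-(c * u ^ 2)) ≤ Real.exp (-(c * u ^ 2 / 2)) := by
    rw [← Real.exp_add]
    apply Real.exp_le_exp.2
    rw [hx_def]
    nlinarith [mul_nonneg (mul_nonneg hc.le (by linarith : (0:ℝ) ≤ u))
      (by linarith : (0:ℝ) ≤ u / 2 - 2 * t)]
  have q_pow : Real.exp (-(2 * Real.pi - 1)) ^ (k + 1)
      = Real.exp (-((2 * Real.pi - 1) * u)) := by
    rw [← Real.exp_nat_mul]
    congr 1
    rw [hu_def]; push_cast; ring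
  have key : Real.exp (-(c * u ^ 2)) * (x ^ 2 * Real.exp x)
      ≤ 64 * Real.pi ^ 2 * t ^ 2 * Real.exp (-((2 * Real.pi - 1) * u)) := by
    have s1 : Real.exp (-(c * u ^ 2)) * (x ^ 2 * Real.exp x)
        = x ^ 2 * (Real.exp x * Real.exp (-(c * u ^ 2))) := by ring
    rw [s1]
    have s2 : x ^ 2 * (Real.exp x * Real.exp (-(c * u ^ 2)))
        ≤ x ^ 2 * Real.exp (-(c * u ^ 2 / 2)) :=
      mul_le_mul_of_nonneg_left c1 (sq_nonneg x)
    refine s2.trans ?_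
    have s3 : x ^ 2 * Real.exp (-(c * u ^ 2 / 2))
        = 4 * Real.pi ^ 2 * t ^ 2 * u ^ 2
            * ((R ^ 2) ^ 2 * Real.exp (-(Real.pi * u ^ 2 * R ^ 2 / 2))) := by
      rw [hx_def, hc_def]; ring_nf
    rw [s3]
    have s4 := mul_le_mul_of_nonneg_left (sq_mul_exp_le (R ^ 2) u hR2 hu)
      (by positivity : (0:ℝ) ≤ 4 * Real.pi ^ 2 * t ^ 2 * u ^ 2)
    refine s4.trans ?_
    have s5 : 4 * Real.pi ^ 2 * t ^ 2 * u ^ 2 * (16 * Real.exp (-(2 * Real.pi * u ^ 2)))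
        = 64 * Real.pi ^ 2 * t ^ 2 * (u ^ 2 * Real.exp (-(2 * Real.pi * u ^ 2))) := by ring
    rw [s5]
    exact mul_le_mul_of_nonneg_left (sq_mul_exp_le' u hu) (by positivity)
  rw [e1, e2, q_pow]
  have expand : Real.exp (-(c * t ^ 2)) * Real.exp (-(c * u ^ 2)) * Real.exp (-x)
      + Real.exp (-(c * t ^ 2)) * Real.exp (-(c * u ^ 2)) * Real.exp x
      = Real.exp (-(c * t ^ 2)) * (Real.exp (-(c * u ^ 2)) * (Real.exp x + Real.exp (-x))) := by
    ring
  rw [expand]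
  apply mul_le_mul_of_nonneg_left _ (Real.exp_pos _).le
  have step : Real.exp (-(c * u ^ 2)) * (Real.exp x + Real.exp (-x))
      ≤ Real.exp (-(c * u ^ 2)) * (2 + x ^ 2 * Real.exp x) :=
    mul_le_mul_of_nonneg_left hL1 (Real.exp_pos _).le
  refine step.trans ?_
  have s6 : Real.exp (-(c * u ^ 2)) * (2 + x ^ 2 * Real.exp x)
      = 2 * Real.exp (-(c * u ^ 2)) + Real.exp (-(c * u ^ 2)) * (x ^ 2 * Real.exp x) := by ring
  rw [s6]
  linarith [key]

lemma pR_pos' {R : ℝ} (hR : 0 < R) : 0 < Real.pi * R ^ 2 := by positivity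

lemma summable_A {R : ℝ} (hR : 0 < R) (t : ℝ) :
    Summable fun k : ℕ => Real.exp (-(Real.pi * R ^ 2 * (((k : ℝ) + 1) + t) ^ 2)) :=
  (summable_gauss_nat _ (1 + t) (pR_pos' hR)).congr fun k => by ring_nf

lemma summable_B {R : ℝ} (hR : 0 < R) (t : ℝ) :
    Summable fun k : ℕ => Real.exp (-(Real.pi * R ^ 2 * (((k : ℝ) + 1) - t) ^ 2)) :=
  (summable_gauss_nat _ (1 - t) (pR_pos' hR)).congr fun k => by ring_nf

lemma summable_Sp {R : ℝ} (hR : 0 < R) :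
    Summable fun k : ℕ => Real.exp (-(Real.pi * R ^ 2 * ((k : ℝ) + 1) ^ 2)) :=
  (summable_gauss_nat _ 1 (pR_pos' hR)).congr fun k => by ring_nf

lemma Gt_zero_eq {R : ℝ} (hR : 0 < R) : Gt R 0 = Sp R + 1 + Sp R := by
  have h := Gt_split hR 0
  simp only [add_zero, sub_zero, mul_zero, ne_eq, OfNat.ofNat_ne_zero, not_false_eq_true,
    zero_pow, neg_zero, Real.exp_zero] at h
  rw [h, Sp]

lemma sum_nat_sq_eq {R : ℝ} (hR : 0 < R) :
    ∑' k : ℕ, Real.exp (-(Real.pi * R ^ 2 * (k : ℝ) ^ 2)) = 1 + Sp R := by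
  have hs : Summable fun k : ℕ => Real.exp (-(Real.pi * R ^ 2 * (k : ℝ) ^ 2)) :=
    (summable_gauss_nat _ 0 (pR_pos' hR)).congr fun k => by ring_nf
  rw [Summable.tsum_eq_zero_add hs]
  congr 1
  · norm_num
  · rw [Sp]
    refine tsum_congr fun k => ?_
    push_cast
    ring_nf

lemma Gt_crude {R t : ℝ} (hR : 0 < R) (ht0 : 0 ≤ t) (ht : t ≤ 1/2) :
    Gt R t ≤ Real.exp (-(Real.pi * R ^ 2 * t ^ 2)) * (Gt R 0 + 1) := by
  have hc := pR_pos' hR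
  rw [Gt_split hR t, Gt_zero_eq hR]
  have hA : (∑' k : ℕ, Real.exp (-(Real.pi * R ^ 2 * (((k : ℝ) + 1) + t) ^ 2)))
      ≤ Real.exp (-(Real.pi * R ^ 2 * t ^ 2)) * Sp R := by
    rw [Sp, ← tsum_mul_left]
    refine Summable.tsum_le_tsum (fun k => ?_) (summable_A hR t) ((summable_Sp hR).mul_left _)
    rw [← Real.exp_add]
    apply Real.exp_le_exp.2
    have hk0 : (0:ℝ) ≤ (k:ℝ) := Nat.cast_nonneg k
    nlinarith [mul_nonneg (mul_nonneg hc.le (by linarith : (0:ℝ) ≤ (k:ℝ) + 1)) ht0]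
  have hB : (∑' k : ℕ, Real.exp (-(Real.pi * R ^ 2 * (((k : ℝ) + 1) - t) ^ 2)))
      ≤ Real.exp (-(Real.pi * R ^ 2 * t ^ 2)) * (1 + Sp R) := by
    rw [← sum_nat_sq_eq hR, ← tsum_mul_left]
    refine Summable.tsum_le_tsum (fun k => ?_) (summable_B hR t)
      (((summable_gauss_nat _ 0 (pR_pos' hR)).congr fun k => by ring_nf).mul_left _)
    rw [← Real.exp_add]
    apply Real.exp_le_exp.2
    have hk0 : (0:ℝ) ≤ (k:ℝ) := Nat.cast_nonneg k
    nlinarith [mul_nonneg hc.le (mul_nonneg (by linarith : (0:ℝ) ≤ (k:ℝ)) (by linarith : (0:ℝ) ≤ 1 - t)),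
      mul_nonneg hc.le (by linarith : (0:ℝ) ≤ 1 - 2*t)]
  have := add_le_add (add_le_add hA (le_refl (Real.exp (-(Real.pi * R ^ 2 * t ^ 2))))) hB
  refine this.trans (le_of_eq ?_)
  ring

lemma Gt_refined {R t : ℝ} (hR : 2 ≤ R) (ht0 : 0 ≤ t) (ht : t ≤ 1/4) :
    Gt R t ≤ Real.exp (-(Real.pi * R ^ 2 * t ^ 2)) *
      (Gt R 0 + (Real.pi - 1/5) * R ^ 2 * t ^ 2) := by
  have hR0 : 0 < R := by linarith
  have hc := pR_pos' hR0
  have hpi := Real.pi_gt_d6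
  have hpi' := Real.pi_lt_d2
  set q : ℝ := Real.exp (-(2 * Real.pi - 1)) with hq_def
  have hq0 : 0 < q := Real.exp_pos _
  have hq1 : q ≤ 1/100 := q_small
  have hgeom : Summable fun k : ℕ => q ^ (k + 1) := by
    refine ((summable_geometric_of_lt_one hq0.le (by linarith)).mul_right q).congr fun k => ?_
    rw [pow_succ]
  have hRHSsum : Summable fun k : ℕ =>
      Real.exp (-(Real.pi * R ^ 2 * t ^ 2)) *
        (2 * Real.exp (-(Real.pi * R ^ 2 * ((k:ℝ) + 1) ^ 2))
          + 64 * Real.pi ^ 2 * t ^ 2 * q ^ (k + 1)) :=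
    (((summable_Sp hR0).mul_left 2).add (hgeom.mul_left _)).mul_left _
  rw [Gt_split hR0 t, Gt_zero_eq hR0]
  have hAB : (∑' k : ℕ, Real.exp (-(Real.pi * R ^ 2 * (((k : ℝ) + 1) + t) ^ 2)))
      + (∑' k : ℕ, Real.exp (-(Real.pi * R ^ 2 * (((k : ℝ) + 1) - t) ^ 2)))
      = ∑' k : ℕ, (Real.exp (-(Real.pi * R ^ 2 * (((k : ℝ) + 1) + t) ^ 2))
          + Real.exp (-(Real.pi * R ^ 2 * (((k : ℝ) + 1) - t) ^ 2))) :=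
    (Summable.tsum_add (summable_A hR0 t) (summable_B hR0 t)).symm
  have hle : (∑' k : ℕ, (Real.exp (-(Real.pi * R ^ 2 * (((k : ℝ) + 1) + t) ^ 2))
          + Real.exp (-(Real.pi * R ^ 2 * (((k : ℝ) + 1) - t) ^ 2))))
      ≤ ∑' k : ℕ, Real.exp (-(Real.pi * R ^ 2 * t ^ 2)) *
        (2 * Real.exp (-(Real.pi * R ^ 2 * ((k:ℝ) + 1) ^ 2))
          + 64 * Real.pi ^ 2 * t ^ 2 * q ^ (k + 1)) :=
    Summable.tsum_le_tsum (fun k => term_refined R t hR ht0 ht k)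
      ((summable_A hR0 t).add (summable_B hR0 t)) hRHSsum
  have hRHS : (∑' k : ℕ, Real.exp (-(Real.pi * R ^ 2 * t ^ 2)) *
        (2 * Real.exp (-(Real.pi * R ^ 2 * ((k:ℝ) + 1) ^ 2))
          + 64 * Real.pi ^ 2 * t ^ 2 * q ^ (k + 1)))
      = Real.exp (-(Real.pi * R ^ 2 * t ^ 2)) *
        (2 * Sp R + 64 * Real.pi ^ 2 * t ^ 2 * (q * (1 - q)⁻¹)) := by
    rw [tsum_mul_left]
    congr 1
    rw [Summable.tsum_add ((summable_Sp hR0).mul_left 2) (hgeom.mul_left _), tsum_mul_left,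
      tsum_mul_left, Sp]
    congr 1
    have : (∑' k : ℕ, q ^ (k + 1)) = (∑' k : ℕ, q ^ k * q) := by
      refine tsum_congr fun k => ?_; rw [pow_succ]
    rw [this, tsum_mul_right, tsum_geometric_of_lt_one hq0.le (by linarith)]
    ring
  have htail : 64 * Real.pi ^ 2 * t ^ 2 * (q * (1 - q)⁻¹) ≤ (Real.pi - 1/5) * R ^ 2 * t ^ 2 := by
    have h99 : (1 - q)⁻¹ ≤ (99/100:ℝ)⁻¹ := by
      apply inv_anti₀ (by norm_num) (by linarith)
    have hqq : q * (1 - q)⁻¹ ≤ (1/100) * (99/100:ℝ)⁻¹ := by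
      apply mul_le_mul hq1 h99 (by rw [inv_nonneg]; linarith) (by norm_num)
    have hR2 : (4:ℝ) ≤ R ^ 2 := by nlinarith
    have ht2 : (0:ℝ) ≤ t ^ 2 := sq_nonneg t
    have hpisq : Real.pi ^ 2 < 9.9225 := by nlinarith
    have hcoef : 64 * Real.pi ^ 2 * (1/100 * (99/100:ℝ)⁻¹) ≤ (Real.pi - 1/5) * 4 := by
      rw [show (1/100 * (99/100:ℝ)⁻¹ : ℝ) = 1/99 by norm_num]
      nlinarith
    calc 64 * Real.pi ^ 2 * t ^ 2 * (q * (1 - q)⁻¹)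
        ≤ 64 * Real.pi ^ 2 * t ^ 2 * (1/100 * (99/100:ℝ)⁻¹) :=
          mul_le_mul_of_nonneg_left hqq (by positivity)
      _ = (64 * Real.pi ^ 2 * (1/100 * (99/100:ℝ)⁻¹)) * t ^ 2 := by ring
      _ ≤ ((Real.pi - 1/5) * 4) * t ^ 2 := mul_le_mul_of_nonneg_right hcoef ht2
      _ ≤ (Real.pi - 1/5) * R ^ 2 * t ^ 2 := by
          nlinarith [mul_nonneg ht2 (by nlinarith : (0:ℝ) ≤ R ^ 2 - 4)]
  calc (∑' k : ℕ, Real.exp (-(Real.pi * R ^ 2 * (((k : ℝ) + 1) + t) ^ 2)))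
      + Real.exp (-(Real.pi * R ^ 2 * t ^ 2))
      + ∑' k : ℕ, Real.exp (-(Real.pi * R ^ 2 * (((k : ℝ) + 1) - t) ^ 2))
      = ((∑' k : ℕ, Real.exp (-(Real.pi * R ^ 2 * (((k : ℝ) + 1) + t) ^ 2)))
        + ∑' k : ℕ, Real.exp (-(Real.pi * R ^ 2 * (((k : ℝ) + 1) - t) ^ 2)))
        + Real.exp (-(Real.pi * R ^ 2 * t ^ 2)) := by ring
    _ ≤ Real.exp (-(Real.pi * R ^ 2 * t ^ 2)) *
        (2 * Sp R + 64 * Real.pi ^ 2 * t ^ 2 * (q * (1 - q)⁻¹))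
        + Real.exp (-(Real.pi * R ^ 2 * t ^ 2)) := by
        rw [hAB]
        exact add_le_add (hle.trans (le_of_eq hRHS)) (le_refl _)
    _ ≤ Real.exp (-(Real.pi * R ^ 2 * t ^ 2)) * (Sp R + 1 + Sp R + (Real.pi - 1/5) * R ^ 2 * t ^ 2) := by
        have hE := (Real.exp_pos (-(Real.pi * R ^ 2 * t ^ 2))).le
        nlinarith [mul_le_mul_of_nonneg_left htail hE]

lemma exp_split (R t : ℝ) : Real.exp (-(R ^ 2 * t ^ 2) / 5)
    = Real.exp (-(Real.pi * R ^ 2 * t ^ 2)) * Real.exp ((Real.pi - 1/5) * (R ^ 2 * t ^ 2)) := by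
  rw [← Real.exp_add]; ring_nf

lemma Gt_main {R t : ℝ} (hR : 2 ≤ R) (ht0 : 0 ≤ t) (ht : t ≤ 1/2) :
    Gt R t ≤ Real.exp (-(R ^ 2 * t ^ 2) / 5) * Gt R 0 := by
  have hR0 : 0 < R := by linarith
  have hG1 := one_le_Gt_zero hR0
  have hpi := Real.pi_gt_d6
  have hy0 : (0:ℝ) ≤ (Real.pi - 1/5) * (R ^ 2 * t ^ 2) :=
    mul_nonneg (by nlinarith) (by positivity)
  have hexp := Real.add_one_le_exp ((Real.pi - 1/5) * (R ^ 2 * t ^ 2))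
  rw [exp_split, mul_assoc]
  rcases le_or_gt t (1/4) with h | h
  · refine (Gt_refined hR ht0 h).trans ?_
    apply mul_le_mul_of_nonneg_left _ (Real.exp_pos _).le
    nlinarith [mul_le_mul_of_nonneg_right hexp (by linarith : (0:ℝ) ≤ Gt R 0)]
  · refine (Gt_crude hR0 ht0 ht).trans ?_
    apply mul_le_mul_of_nonneg_left _ (Real.exp_pos _).le
    have h2 : (2:ℝ) ≤ Real.exp ((Real.pi - 1/5) * (R ^ 2 * t ^ 2)) := by
      rw [← Real.exp_log (by norm_num : (0:ℝ) < 2)]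
      apply Real.exp_le_exp.2
      have hlog := Real.log_two_lt_d9
      have hR2 : (4:ℝ) ≤ R ^ 2 := by nlinarith
      have ht2 : (1/16:ℝ) ≤ t ^ 2 := by nlinarith
      nlinarith [mul_nonneg (by nlinarith : (0:ℝ) ≤ R ^ 2 - 4) (by nlinarith : (0:ℝ) ≤ t ^ 2)]
    nlinarith [mul_le_mul_of_nonneg_right h2 (by linarith : (0:ℝ) ≤ Gt R 0 - 1),
      mul_le_mul_of_nonneg_right h2 (by linarith : (0:ℝ) ≤ Gt R 0)]

lemma Gt_round {R : ℝ} (hR : 2 ≤ R) (t : ℝ) :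
    Gt R t ≤ Real.exp (-(R ^ 2 * (t - round t) ^ 2) / 5) * Gt R 0 := by
  have hR0 : 0 < R := by linarith
  set s : ℝ := t - round t with hs_def
  have habs : |s| ≤ 1/2 := abs_sub_round t
  have hts : Gt R t = Gt R s := by
    have h := Gt_int_add (R := R) s (round t)
    rw [show s + ((round t : ℤ) : ℝ) = t by rw [hs_def]; ring] at h
    exact h
  rw [hts]
  rcases le_or_gt 0 s with h | h
  · exact Gt_main hR h (by rw [abs_of_nonneg h] at habs; exact habs)
  · have hneg : Gt R s = Gt R (-s) := by
      rw [← Gt_neg R (-s), neg_neg]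
    rw [hneg, show (s:ℝ)^2 = (-s)^2 by ring]
    exact Gt_main hR (by linarith) (by rw [abs_of_neg h] at habs; linarith)

lemma poisson1D {R : ℝ} (hR : 0 < R) (t : ℝ) :
    (∑' k : ℤ, ((Real.exp (-Real.pi * (k:ℝ) ^ 2 / R ^ 2) : ℝ) : ℂ)
      * Complex.exp (-(2 * (Real.pi : ℂ) * Complex.I) * ((t * (k:ℝ) : ℝ) : ℂ)))
    = (R : ℂ) * ((Gt R t : ℝ) : ℂ) := by
  have hRne : (R:ℂ) ≠ 0 := Complex.ofReal_ne_zero.2 hR.ne'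
  have ha : (0:ℝ) < (((R ^ 2)⁻¹ : ℝ) : ℂ).re := by
    rw [Complex.ofReal_re]; positivity
  have key := Complex.tsum_exp_neg_quadratic ha (-(Complex.I * (t : ℂ)))
  have lhs_eq : (∑' k : ℤ, ((Real.exp (-Real.pi * (k:ℝ) ^ 2 / R ^ 2) : ℝ) : ℂ)
      * Complex.exp (-(2 * (Real.pi : ℂ) * Complex.I) * ((t * (k:ℝ) : ℝ) : ℂ)))
      = ∑' n : ℤ, Complex.exp (-(Real.pi:ℂ) * (((R ^ 2)⁻¹ : ℝ) : ℂ) * (n:ℂ) ^ 2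
          + 2 * (Real.pi:ℂ) * (-(Complex.I * (t : ℂ))) * (n:ℂ)) := by
    refine tsum_congr fun k => ?_
    rw [Complex.ofReal_exp, ← Complex.exp_add]
    congr 1
    push_cast
    have h2 : ((R:ℂ)^2) ≠ 0 := pow_ne_zero 2 hRne
    field_simp
  rw [lhs_eq, key]
  have hI : Complex.I * (-(Complex.I * (t:ℂ))) = (t:ℂ) := by
    rw [mul_neg, ← mul_assoc, Complex.I_mul_I]; ring
  have hterm : ∀ n : ℤ, Complex.exp (-(Real.pi:ℂ) / (((R ^ 2)⁻¹ : ℝ) : ℂ)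
      * ((n:ℂ) + Complex.I * (-(Complex.I * (t:ℂ)))) ^ 2)
      = ((Real.exp (-(Real.pi * R ^ 2 * (((n:ℤ):ℝ) + t) ^ 2)) : ℝ) : ℂ) := by
    intro n
    rw [hI, Complex.ofReal_exp]
    congr 1
    push_cast
    have h2 : ((R:ℂ)^2) ≠ 0 := pow_ne_zero 2 hRne
    field_simp
  have hsum : (∑' n : ℤ, Complex.exp (-(Real.pi:ℂ) / (((R ^ 2)⁻¹ : ℝ) : ℂ)
      * ((n:ℂ) + Complex.I * (-(Complex.I * (t:ℂ)))) ^ 2)) = ((Gt R t : ℝ) : ℂ) := by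
    rw [Gt, Complex.ofReal_tsum]
    exact tsum_congr hterm
  rw [hsum]
  have hpow : (((R ^ 2)⁻¹ : ℝ) : ℂ) ^ (1/2 : ℂ) = ((R⁻¹ : ℝ) : ℂ) := by
    rw [show ((1/2 : ℂ)) = ((1/2 : ℝ) : ℂ) by norm_num]
    rw [← Complex.ofReal_cpow (by positivity)]
    congr 1
    rw [← Real.sqrt_eq_rpow, Real.sqrt_inv, Real.sqrt_sq hR.le]
  rw [hpow]
  push_cast
  rw [one_div, inv_inv]

lemma summable_norm_pi_prod : ∀ (n : ℕ) (g : Fin n → ℤ → ℂ),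
    (∀ i, Summable fun k => ‖g i k‖) →
    Summable fun x : Fin n → ℤ => ‖∏ i, g i (x i)‖ := by
  intro n
  induction n with
  | zero =>
    intro g hg
    haveI : Finite (Fin 0 → ℤ) := Finite.of_subsingleton
    exact Summable.of_finite
  | succ n ih =>
    intro g hg
    rw [← (Fin.consEquiv (fun _ : Fin (n+1) => ℤ)).summable_iff]
    have hprod : Summable fun p : ℤ × (Fin n → ℤ) =>
        ‖g 0 p.1‖ * ‖∏ i : Fin n, g i.succ (p.2 i)‖ :=
      Summable.mul_of_nonneg (f := fun k : ℤ => ‖g 0 k‖)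
        (g := fun y : Fin n → ℤ => ‖∏ i : Fin n, g i.succ (y i)‖)
        (hg 0) (ih (fun i => g i.succ) (fun i => hg i.succ))
        (fun _ => norm_nonneg _) (fun _ => norm_nonneg _)
    refine hprod.congr fun p => ?_
    simp only [Function.comp_apply, Fin.consEquiv_apply, Fin.prod_univ_succ,
      Fin.cons_zero, Fin.cons_succ, norm_mul]

lemma tsum_pi_prod : ∀ (n : ℕ) (g : Fin n → ℤ → ℂ),
    (∀ i, Summable fun k => ‖g i k‖) →
    (∑' x : Fin n → ℤ, ∏ i, g i (x i)) = ∏ i, ∑' k, g i k := by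
  intro n
  induction n with
  | zero =>
    intro g hg
    simp
  | succ n ih =>
    intro g hg
    calc (∑' x : Fin (n+1) → ℤ, ∏ i, g i (x i))
        = ∑' p : ℤ × (Fin n → ℤ), ∏ i, g i ((Fin.consEquiv (fun _ : Fin (n+1) => ℤ)) p i) :=
          ((Fin.consEquiv (fun _ : Fin (n+1) => ℤ)).tsum_eq _).symm
      _ = ∑' p : ℤ × (Fin n → ℤ), g 0 p.1 * ∏ i : Fin n, g i.succ (p.2 i) :=
          tsum_congr (fun p => by
            simp only [Fin.consEquiv_apply, Fin.prod_univ_succ, Fin.cons_zero,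
              Fin.cons_succ])
      _ = (∑' k, g 0 k) * ∑' y : Fin n → ℤ, ∏ i : Fin n, g i.succ (y i) :=
          (tsum_mul_tsum_of_summable_norm (hg 0)
            (summable_norm_pi_prod n (fun i => g i.succ) (fun i => hg i.succ))).symm
      _ = ∏ i : Fin (n+1), ∑' k, g i k := by
          rw [ih (fun i => g i.succ) (fun i => hg i.succ), Fin.prod_univ_succ]

/-- **Fourier decay of the discrete Gaussian** (Lemma 4.6): for every `n ≥ 1`,
`R ≥ 2` and every torus point `ζ ∈ 𝕋ⁿ`, `|γ̂_R(ζ)| ≤ exp(-R²‖ζ‖²_{𝕋ⁿ}/5)`. -/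
theorem discrete_gaussian_fourier_decay
    (n : ℕ) (hn : 1 ≤ n) (R : ℝ) (hR : 2 ≤ R) (ζ : Fin n → ℝ) :
    ‖ft (dgauss n R) ζ‖ ≤ Real.exp (-(R ^ 2 * tnorm ζ ^ 2) / 5) := by
  have hR0 : 0 < R := by linarith
  set D : ℝ := ∑' y : Fin n → ℤ, Real.exp (-Real.pi * l2Z y ^ 2 / R ^ 2) with hD_def
  set g : Fin n → ℤ → ℂ := fun i k =>
    ((Real.exp (-Real.pi * (k:ℝ) ^ 2 / R ^ 2) : ℝ) : ℂ)
      * Complex.exp (-(2 * (Real.pi : ℂ) * Complex.I) * ((ζ i * (k:ℝ) : ℝ) : ℂ)) with hg_def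
  -- norms of g
  have hnorm : ∀ (i : Fin n) (k : ℤ), ‖g i k‖ = Real.exp (-Real.pi * (k:ℝ) ^ 2 / R ^ 2) := by
    intro i k
    rw [hg_def]
    simp only [norm_mul, Complex.norm_real, Real.norm_eq_abs, Complex.norm_exp,
      abs_of_pos (Real.exp_pos _)]
    have : (-(2 * (Real.pi : ℂ) * Complex.I) * ((ζ i * (k:ℝ) : ℝ) : ℂ)).re = 0 := by
      simp [Complex.mul_re]
    rw [this, Real.exp_zero, mul_one]
  have hgs : ∀ i, Summable fun k => ‖g i k‖ := by
    intro i
    refine (summable_gauss (Real.pi * (R ^ 2)⁻¹) 0 (by positivity)).congr fun k => ?_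
    rw [hnorm]
    congr 1
    ring
  -- similarly for the weight function alone
  set g0 : Fin n → ℤ → ℂ := fun _ k => ((Real.exp (-Real.pi * (k:ℝ) ^ 2 / R ^ 2) : ℝ) : ℂ)
    with hg0_def
  have hg0s : ∀ i : Fin n, Summable fun k => ‖g0 i k‖ := by
    intro i
    refine (summable_gauss (Real.pi * (R ^ 2)⁻¹) 0 (by positivity)).congr fun k => ?_
    rw [hg0_def]
    simp only [Complex.norm_real, Real.norm_eq_abs, abs_of_pos (Real.exp_pos _)]
    congr 1
    ring
  -- weight factorization
  have hweight : ∀ x : Fin n → ℤ, Real.exp (-Real.pi * l2Z x ^ 2 / R ^ 2)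
      = ∏ i, Real.exp (-Real.pi * ((x i : ℝ)) ^ 2 / R ^ 2) := by
    intro x
    rw [← Real.exp_sum]
    congr 1
    rw [l2Z, l2, Real.sq_sqrt (Finset.sum_nonneg fun i _ => sq_nonneg _)]
    rw [Finset.mul_sum, Finset.sum_div]
  -- the n-dim Poisson for the denominator
  have hg0sum : ∀ i : Fin n, (∑' k : ℤ, g0 i k) = ((R * Gt R 0 : ℝ) : ℂ) := by
    intro i
    have h := poisson1D hR0 0
    have h2 : (∑' k : ℤ, ((Real.exp (-Real.pi * (k:ℝ) ^ 2 / R ^ 2) : ℝ) : ℂ)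
        * Complex.exp (-(2 * (Real.pi : ℂ) * Complex.I) * ((0 * (k:ℝ) : ℝ) : ℂ)))
        = ∑' k : ℤ, g0 i k := by
      refine tsum_congr fun k => ?_
      rw [hg0_def]
      norm_num
    rw [h2] at h
    rw [h]
    push_cast
    ring
  have hD : D = (R * Gt R 0) ^ n := by
    have hC : (D : ℂ) = ((R * Gt R 0 : ℝ) : ℂ) ^ n := by
      rw [hD_def, Complex.ofReal_tsum]
      have : ∀ y : Fin n → ℤ, ((Real.exp (-Real.pi * l2Z y ^ 2 / R ^ 2) : ℝ) : ℂ)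
          = ∏ i, g0 i (y i) := by
        intro y
        rw [hweight y, Complex.ofReal_prod]
      rw [tsum_congr this, tsum_pi_prod n g0 hg0s, Finset.prod_congr rfl fun i _ => hg0sum i,
        Finset.prod_const, Finset.card_univ, Fintype.card_fin]
    exact_mod_cast hC
  have hGt0pos : 0 < Gt R 0 := Gt_pos hR0 0
  have hDpos : 0 < D := by rw [hD]; positivity
  -- the Fourier transform
  have hft : ft (dgauss n R) ζ = ((D⁻¹ * ∏ i, (R * Gt R (ζ i)) : ℝ) : ℂ) := by
    rw [ft]
    have hterm : ∀ x : Fin n → ℤ, ((dgauss n R x : ℝ) : ℂ)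
        * Complex.exp (-(2 * (Real.pi : ℂ) * Complex.I) * (pair ζ x : ℂ))
        = ((D⁻¹ : ℝ) : ℂ) * ∏ i, g i (x i) := by
      intro x
      have hexp : Complex.exp (-(2 * (Real.pi : ℂ) * Complex.I) * (pair ζ x : ℂ))
          = ∏ i, Complex.exp (-(2 * (Real.pi : ℂ) * Complex.I) * ((ζ i * (x i : ℝ) : ℝ) : ℂ)) := by
        rw [← Complex.exp_sum]
        congr 1
        rw [pair, Complex.ofReal_sum, Finset.mul_sum]
      have hgx : (∏ i, ((Real.exp (-Real.pi * ((x i : ℝ)) ^ 2 / R ^ 2) : ℝ) : ℂ)) *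
          ∏ i, Complex.exp (-(2 * (Real.pi : ℂ) * Complex.I) * ((ζ i * (x i : ℝ) : ℝ) : ℂ))
          = ∏ i, g i (x i) := by
        rw [← Finset.prod_mul_distrib]
      rw [dgauss, ← hD_def, hexp, Complex.ofReal_div, hweight x, Complex.ofReal_prod,
        ← hgx, div_eq_mul_inv, Complex.ofReal_inv]
      ring
    rw [tsum_congr hterm, tsum_mul_left, tsum_pi_prod n g hgs]
    have : ∀ i : Fin n, (∑' k, g i k) = ((R * Gt R (ζ i) : ℝ) : ℂ) := by
      intro i
      have h := poisson1D hR0 (ζ i)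
      rw [hg_def, Complex.ofReal_mul]
      exact h
    rw [Finset.prod_congr rfl fun i _ => this i]
    push_cast
    ring
  -- compute the absolute value
  have habs : ‖ft (dgauss n R) ζ‖ = ∏ i, (Gt R (ζ i) / Gt R 0) := by
    rw [hft, Complex.norm_real, Real.norm_eq_abs, abs_of_nonneg]
    · rw [hD]
      rw [Finset.prod_mul_distrib, Finset.prod_const, Finset.card_univ, Fintype.card_fin]
      rw [Finset.prod_div_distrib, Finset.prod_const, Finset.card_univ, Fintype.card_fin]
      field_simp
      ring
    · apply mul_nonneg (inv_nonneg.2 hDpos.le)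
      exact Finset.prod_nonneg fun i _ => mul_nonneg hR0.le (Gt_nonneg R (ζ i))
  rw [habs]
  -- bound each factor
  have hfac : ∀ i : Fin n, Gt R (ζ i) / Gt R 0
      ≤ Real.exp (-(R ^ 2 * (ζ i - round (ζ i)) ^ 2) / 5) := by
    intro i
    rw [div_le_iff₀ hGt0pos]
    exact Gt_round hR (ζ i)
  have hprod : (∏ i, (Gt R (ζ i) / Gt R 0))
      ≤ ∏ i, Real.exp (-(R ^ 2 * (ζ i - round (ζ i)) ^ 2) / 5) :=
    Finset.prod_le_prod (fun i _ => div_nonneg (Gt_nonneg R (ζ i)) hGt0pos.le)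
      (fun i _ => hfac i)
  refine hprod.trans ?_
  rw [← Real.exp_sum]
  apply Real.exp_le_exp.2
  -- tnorm bound
  have htn0 : 0 ≤ tnorm ζ := Real.iInf_nonneg fun z => Real.sqrt_nonneg _
  have htn : tnorm ζ ≤ l2 (fun i => ζ i - (round (ζ i) : ℤ)) := by
    apply ciInf_le ⟨0, ?_⟩ (fun i => round (ζ i))
    rintro y ⟨z, rfl⟩
    exact Real.sqrt_nonneg _
  have htnorm : tnorm ζ ^ 2 ≤ ∑ i, (ζ i - round (ζ i)) ^ 2 := by
    have h2 := pow_le_pow_left₀ htn0 htn 2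
    rwa [l2, Real.sq_sqrt (Finset.sum_nonneg fun i _ => sq_nonneg _)] at h2
  have hsum : (∑ i, -(R ^ 2 * (ζ i - round (ζ i)) ^ 2) / 5)
      = -(R ^ 2 * ∑ i, (ζ i - round (ζ i)) ^ 2) / 5 := by
    rw [Finset.mul_sum]
    rw [← Finset.sum_div]
    congr 1
    rw [← Finset.sum_neg_distrib]
  rw [hsum]
  have := mul_le_mul_of_nonneg_left htnorm (sq_nonneg R)
  linarith
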